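/- Let d ≥ 1, α > 0, and let f, c : ℝ^d → ℂ be Schwartz functions satisfying −Δc + α² c = α² f on ℝ^d. Then ‖c − f‖_{L²(ℝ^d)} ≤ α^{-2} ‖Δf‖_{L²(ℝ^d)}. -/

import Mathlib

open MeasureTheory

/-- The Laplacian `Δg = Σ_k ∂²g/∂x_k²` on `ℝ^d`. -/
noncomputable def lap {d : ℕ} {F : Type*} [NormedAddCommGroup F] [NormedSpace ℝ F]
    (g : EuclideanSpace ℝ (Fin d) → F) (x : EuclideanSpace ℝ (Fin d)) : F :=
  ∑ i : Fin d,
    fderiv ℝ (fun y => fderiv ℝ g y (EuclideanSpace.single i 1)) x (EuclideanSpace.single i 1)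

open SchwartzMap

variable {d : ℕ}
local notation "𝓔" => EuclideanSpace ℝ (Fin d)

noncomputable def pderivCLM (_K : Type) (m : 𝓔) : 𝓢(𝓔, ℂ) →L[ℝ] 𝓢(𝓔, ℂ) :=
  LineDeriv.lineDerivOpCLM ℝ 𝓢(𝓔, ℂ) m

lemma pderivCLM_apply (K : Type) (m : 𝓔) (f : 𝓢(𝓔, ℂ)) (x : 𝓔) :
    pderivCLM K m f x = fderiv ℝ f x m := rfl

noncomputable def lapS (d : ℕ) :
    𝓢(EuclideanSpace ℝ (Fin d), ℂ) →L[ℝ] 𝓢(EuclideanSpace ℝ (Fin d), ℂ) :=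
  ∑ i : Fin d, (pderivCLM ℝ (EuclideanSpace.single i 1)).comp
      (pderivCLM ℝ (EuclideanSpace.single i 1))

lemma schwartz_sum_apply {ι : Type*} (s : Finset ι) (g : ι → 𝓢(𝓔, ℂ)) (x : 𝓔) :
    (∑ i ∈ s, g i) x = ∑ i ∈ s, g i x := by
  change (SchwartzMap.coeHom _ _ _ (∑ i ∈ s, g i)) x = _
  rw [map_sum]
  rw [Finset.sum_apply]; rfl

lemma lapS_apply (w : 𝓢(𝓔, ℂ)) (x : 𝓔) : lapS d w x = lap (⇑w) x := by
  have h1 : lapS d w = ∑ i : Fin d, pderivCLM ℝ (EuclideanSpace.single i 1)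
      (pderivCLM ℝ (EuclideanSpace.single i 1) w) := by
    simp [lapS, ContinuousLinearMap.sum_apply]
  rw [h1, schwartz_sum_apply]
  unfold lap
  refine Finset.sum_congr rfl fun i _ => ?_
  rw [pderivCLM_apply]
  rfl

lemma integ_mul_conj (u v : 𝓢(𝓔, ℂ)) :
    Integrable (fun x => u x * (starRingEnd ℂ) (v x)) volume := by
  have h2 : Integrable (fun x => (starRingEnd ℂ) (v x) * u x) volume := by
    refine (u.integrable (μ := volume)).bdd_mul (c := ‖v.toBoundedContinuousFunction‖)
      ((Complex.continuous_conj.comp v.continuous).aestronglyMeasurable) ?_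
    refine Filter.Eventually.of_forall (fun x => ?_)
    simpa using v.toBoundedContinuousFunction.norm_coe_le_norm x
  simpa [mul_comm] using h2

noncomputable def Bm : ℂ →L[ℝ] ℂ →L[ℝ] ℂ :=
  ((ContinuousLinearMap.mul ℝ ℂ).flip).comp (Complex.conjCLE.toContinuousLinearMap)

lemma Bm_apply (a b : ℂ) : Bm a b = b * (starRingEnd ℂ) a := rfl

lemma ibp (w : 𝓢(𝓔, ℂ)) (v : 𝓔) :
    ∫ x, pderivCLM ℝ v (pderivCLM ℝ v w) x * (starRingEnd ℂ) (w x) =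
      - ∫ x, pderivCLM ℝ v w x * (starRingEnd ℂ) (pderivCLM ℝ v w x) := by
  exact integral_bilinear_fderiv_right_eq_neg_left_of_integrable
    (μ := (volume : Measure (EuclideanSpace ℝ (Fin d)))) (B := Bm) (f := ⇑w)
    (g := ⇑(pderivCLM ℝ v w)) (v := v)
    (integ_mul_conj (pderivCLM ℝ v w) (pderivCLM ℝ v w))
    (integ_mul_conj (pderivCLM ℝ v (pderivCLM ℝ v w)) w)
    (integ_mul_conj (pderivCLM ℝ v w) w)
    (fun x _ => w.differentiableAt) (fun x _ => (pderivCLM ℝ v w).differentiableAt)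

lemma re_integral_lapS_mul_conj_nonpos (w : 𝓢(𝓔, ℂ)) :
    (∫ x, lapS d w x * (starRingEnd ℂ) (w x)).re ≤ 0 := by
  have h1 : (fun x : 𝓔 => lapS d w x * (starRingEnd ℂ) (w x)) =
      fun x => ∑ i : Fin d, (pderivCLM ℝ (EuclideanSpace.single i 1)
        (pderivCLM ℝ (EuclideanSpace.single i 1) w)) x * (starRingEnd ℂ) (w x) := by
    funext x
    rw [← Finset.sum_mul]
    congr 1
    rw [show lapS d w = ∑ i : Fin d, pderivCLM ℝ (EuclideanSpace.single i 1)
      (pderivCLM ℝ (EuclideanSpace.single i 1) w) by simp [lapS, ContinuousLinearMap.sum_apply]]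
    exact schwartz_sum_apply _ _ x
  rw [h1, integral_finset_sum _ (fun i _ => integ_mul_conj _ w)]
  rw [Complex.re_sum]
  refine Finset.sum_nonpos fun i _ => ?_
  rw [ibp w (EuclideanSpace.single i 1)]
  set z := pderivCLM ℝ (EuclideanSpace.single i 1) w
  have h2 : ∫ x, z x * (starRingEnd ℂ) (z x) = ((∫ x, Complex.normSq (z x) : ℝ) : ℂ) := by
    rw [show (fun x : 𝓔 => z x * (starRingEnd ℂ) (z x))
        = fun x => ((Complex.normSq (z x) : ℝ) : ℂ) from funext fun x => Complex.mul_conj _]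
    exact integral_ofReal
  rw [Complex.neg_re, h2, Complex.ofReal_re, neg_nonpos]
  exact integral_nonneg fun x => Complex.normSq_nonneg _

lemma integral_mul_conj_self (z : 𝓢(𝓔, ℂ)) :
    ∫ x, z x * (starRingEnd ℂ) (z x) = ((∫ x, Complex.normSq (z x) : ℝ) : ℂ) := by
  rw [show (fun x : 𝓔 => z x * (starRingEnd ℂ) (z x))
      = fun x => ((Complex.normSq (z x) : ℝ) : ℂ) from funext fun x => Complex.mul_conj _]
  exact integral_ofReal

lemma schwartz_memℒp (w : 𝓢(𝓔, ℂ)) : MemLp (⇑w) 2 volume := by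
  rw [memLp_two_iff_integrable_sq_norm w.continuous.aestronglyMeasurable]
  have h1 := (integ_mul_conj w w).norm
  simpa [norm_mul, RCLike.norm_conj, sq] using h1

theorem order_parameter_close_to_density (d : ℕ) (hd : 1 ≤ d) (α : ℝ) (hα : 0 < α)
    (f c : SchwartzMap (EuclideanSpace ℝ (Fin d)) ℂ)
    (heq : ∀ x, -lap (⇑c) x + (α : ℂ) ^ 2 * c x = (α : ℂ) ^ 2 * f x) :
    eLpNorm (fun x => c x - f x) 2 volume ≤
      ENNReal.ofReal (α ^ 2)⁻¹ * eLpNorm (lap (⇑f)) 2 volume := by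
  set u : 𝓢(EuclideanSpace ℝ (Fin d), ℂ) := c - f with hu_def
  set h : 𝓢(EuclideanSpace ℝ (Fin d), ℂ) := lapS d f with hh_def
  have hu_apply : ∀ x, u x = c x - f x := fun x => rfl
  have hlapc : ∀ x, lap (⇑c) x = (α : ℂ) ^ 2 * u x := by
    intro x
    rw [hu_apply]
    linear_combination - heq x
  have hpoint : ∀ x, lapS d u x = (α : ℂ) ^ 2 * u x - h x := by
    intro x
    have h3 : lapS d u = lapS d c - lapS d f := map_sub _ _ _
    rw [h3, SchwartzMap.sub_apply, lapS_apply, hlapc x]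
  have hint_uu := integ_mul_conj u u
  have hint_hu := integ_mul_conj h u
  have hI : (∫ x, lapS d u x * (starRingEnd ℂ) (u x))
      = (α : ℂ) ^ 2 * (∫ x, u x * (starRingEnd ℂ) (u x))
        - ∫ x, h x * (starRingEnd ℂ) (u x) := by
    rw [← integral_const_mul, ← integral_sub (hint_uu.const_mul _) hint_hu]
    congr 1
    funext x
    rw [hpoint x]
    ring
  have hIre := re_integral_lapS_mul_conj_nonpos u
  have hmu : MemLp (⇑u) 2 volume := schwartz_memℒp u
  have hmh : MemLp (⇑h) 2 volume := schwartz_memℒp h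
  set U := hmu.toLp (⇑u) with hU
  set H := hmh.toLp (⇑h) with hH
  set Nu : ℝ := ∫ x, Complex.normSq (u x) with hNu
  have hinner : ∀ (w : 𝓢(EuclideanSpace ℝ (Fin d), ℂ)) (hw : MemLp (⇑w) 2 volume),
      (inner ℂ (hw.toLp ⇑w) U : ℂ) = ∫ x, (starRingEnd ℂ) (w x) * u x := by
    intro w hw
    rw [MeasureTheory.L2.inner_def]
    apply integral_congr_ae
    filter_upwards [hw.coeFn_toLp, hmu.coeFn_toLp] with x hx1 hx2
    rw [RCLike.inner_apply, hx1, hx2, mul_comm]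
  have hnormU2 : ‖U‖ ^ 2 = Nu := by
    rw [InnerProductSpace.norm_sq_eq_re_inner (𝕜 := ℂ), hinner u hmu]
    rw [show (fun x => (starRingEnd ℂ) (u x) * u x)
        = fun x => u x * (starRingEnd ℂ) (u x) from funext fun x => mul_comm _ _]
    rw [integral_mul_conj_self]
    simp [hNu]
  have hcs : (∫ x, h x * (starRingEnd ℂ) (u x)).re ≤ ‖H‖ * ‖U‖ := by
    have h1 : ∫ x, h x * (starRingEnd ℂ) (u x) = (starRingEnd ℂ) (inner ℂ H U : ℂ) := by
      rw [hinner h hmh, ← integral_conj]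
      congr 1
      funext x
      simp [mul_comm]
    rw [h1, Complex.conj_re]
    have h2 : (inner ℂ H U : ℂ).re ≤ ‖(inner ℂ H U : ℂ)‖ := by
      exact Complex.re_le_norm _
    exact le_trans h2 (norm_inner_le_norm H U)
  have hmain : α ^ 2 * Nu ≤ ‖H‖ * ‖U‖ := by
    have e1 : (∫ x, lapS d u x * (starRingEnd ℂ) (u x)).re
        = α ^ 2 * Nu - (∫ x, h x * (starRingEnd ℂ) (u x)).re := by
      rw [hI, integral_mul_conj_self u, ← hNu, Complex.sub_re]
      congr 1
      rw [show (α : ℂ) ^ 2 * (Nu : ℂ) = ((α ^ 2 * Nu : ℝ) : ℂ) by push_cast; ring]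
      exact Complex.ofReal_re _
    linarith
  have hUnorm : ‖U‖ ≤ (α ^ 2)⁻¹ * ‖H‖ := by
    rcases eq_or_lt_of_le (norm_nonneg U) with h0 | h0
    · rw [← h0]
      positivity
    · have h2 : α ^ 2 * ‖U‖ ≤ ‖H‖ := by
        rw [← hnormU2] at hmain
        nlinarith
      rw [le_inv_mul_iff₀ (by positivity)]
      exact h2
  have hEu : eLpNorm (fun x => c x - f x) 2 volume = ENNReal.ofReal ‖U‖ := by
    rw [show (fun x => c x - f x) = ⇑u from funext fun x => (hu_apply x).symm]
    rw [show ‖U‖ = (eLpNorm (⇑u) 2 volume).toReal from MeasureTheory.Lp.norm_toLp _ hmu,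
      ENNReal.ofReal_toReal hmu.2.ne]
  have hEh : eLpNorm (lap (⇑f)) 2 volume = ENNReal.ofReal ‖H‖ := by
    rw [show lap (⇑f) = ⇑h from funext fun x => (lapS_apply f x).symm]
    rw [show ‖H‖ = (eLpNorm (⇑h) 2 volume).toReal from MeasureTheory.Lp.norm_toLp _ hmh,
      ENNReal.ofReal_toReal hmh.2.ne]
  rw [hEu, hEh, ← ENNReal.ofReal_mul (by positivity)]
  exact ENNReal.ofReal_le_ofReal hUnorm
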